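/- Let (H, Δ, Δ') be a Hopf brace with antipode S for Δ. Define ρ: H → H ⊗ H by ρ(h) = S(h_1) h_{21'} ⊗ h_{22'}. Then ρ makes H a left comodule coalgebra over the Hopf algebra (H, Δ', ε); explicitly: (i) (id ⊗ ρ)ρ = (Δ' ⊗ id)ρ and (ε ⊗ id)ρ = id (left (H, Δ')-comodule); (ii) writing ρ(h) = h_{(-1)} ⊗ h_{(0)}, one has h_{(-1)} ⊗ Δ(h_{(0)}) = h_{1(-1)} h_{2(-1)} ⊗ h_{1(0)} ⊗ h_{2(0)} and h_{(-1)} ε(h_{(0)}) = ε(h) 1_H. -/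

import Mathlib

open TensorProduct

noncomputable section

namespace HopfPaper

/-- A Hopf algebra structure (comultiplication `Δ`, counit `ε`, antipode `S`) on a
given `k`-algebra `H`, expressed in terms of `k`-linear maps.  Together with the
algebra structure of `H` this is exactly the data of a Hopf algebra
`(H, m, 1, Δ, ε, S)` over the field `k`. -/
structure HopfStruct (k : Type*) [Field k] (H : Type*) [Ring H] [Algebra k H] where
  /-- the comultiplication -/
  Δ : H →ₗ[k] H ⊗[k] H
  /-- the counit -/
  ε : H →ₗ[k] k
  /-- the antipode -/
  S : H →ₗ[k] H
  coassoc : ∀ h : H,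
    TensorProduct.map (LinearMap.id : H →ₗ[k] H) Δ (Δ h)
      = TensorProduct.assoc k H H H
          (TensorProduct.map Δ (LinearMap.id : H →ₗ[k] H) (Δ h))
  counit_left : ∀ h : H,
    TensorProduct.lid k H (TensorProduct.map ε (LinearMap.id : H →ₗ[k] H) (Δ h)) = h
  counit_right : ∀ h : H,
    TensorProduct.rid k H (TensorProduct.map (LinearMap.id : H →ₗ[k] H) ε (Δ h)) = h
  comul_mul : ∀ a b : H, Δ (a * b) = Δ a * Δ b
  comul_one : Δ 1 = 1
  counit_mul : ∀ a b : H, ε (a * b) = ε a * ε b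
  counit_one : ε 1 = 1
  antipode_left : ∀ h : H,
    LinearMap.mul' k H (TensorProduct.map S (LinearMap.id : H →ₗ[k] H) (Δ h))
      = algebraMap k H (ε h)
  antipode_right : ∀ h : H,
    LinearMap.mul' k H (TensorProduct.map (LinearMap.id : H →ₗ[k] H) S (Δ h))
      = algebraMap k H (ε h)

variable (k : Type*) [Field k]

/-- `m ↦ m ⊗ 1`. -/
def ι₁ (M N : Type*) [Ring M] [Algebra k M] [Ring N] [Algebra k N] :
    M →ₗ[k] M ⊗[k] N :=
  (TensorProduct.mk k M N).flip 1

/-- `n ↦ 1 ⊗ n`. -/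
def ι₂ (M N : Type*) [Ring M] [Algebra k M] [Ring N] [Algebra k N] :
    N →ₗ[k] M ⊗[k] N :=
  TensorProduct.mk k M N 1

/-- multiplication of three factors, `x ⊗ (y ⊗ z) ↦ x * y * z`. -/
def mul₃ (T : Type*) [Ring T] [Algebra k T] : T ⊗[k] (T ⊗[k] T) →ₗ[k] T :=
  (LinearMap.mul' k T).comp
    (TensorProduct.map (LinearMap.id : T →ₗ[k] T) (LinearMap.mul' k T))

/-- multiplication of four factors. -/
def mul₄ (T : Type*) [Ring T] [Algebra k T] :
    T ⊗[k] (T ⊗[k] (T ⊗[k] T)) →ₗ[k] T :=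
  (LinearMap.mul' k T).comp
    (TensorProduct.map (LinearMap.id : T →ₗ[k] T) (mul₃ k T))

/-- The left hand side `h_{1'} ⊗ h_{2'1} ⊗ h_{2'2}` of the Hopf brace compatibility
condition (2.1), i.e. `(id ⊗ Δ) ∘ Δ'`. -/
def braceLHS (H : Type*) [Ring H] [Algebra k H] (Δ Δ' : H →ₗ[k] H ⊗[k] H) :
    H →ₗ[k] H ⊗[k] (H ⊗[k] H) :=
  (TensorProduct.map (LinearMap.id : H →ₗ[k] H) Δ).comp Δ'

/-- The right hand side `h_{11'}S(h_2)h_{31'} ⊗ h_{12'} ⊗ h_{32'}` of the Hopf brace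
compatibility condition (2.1):  it is obtained from the twofold comultiplication
`h ↦ h_1 ⊗ (h_2 ⊗ h_3)` (using `Δ`) by applying `Δ'` to the first and third legs,
`S` to the middle leg, placing the results in the appropriate tensor positions of
`H ⊗ (H ⊗ H)` (filled with `1`s) and multiplying. -/
def braceRHS (H : Type*) [Ring H] [Algebra k H] (Δ Δ' : H →ₗ[k] H ⊗[k] H)
    (S : H →ₗ[k] H) : H →ₗ[k] H ⊗[k] (H ⊗[k] H) :=
  (mul₃ k (H ⊗[k] (H ⊗[k] H))).comp
    ((TensorProduct.map
        ((TensorProduct.map (LinearMap.id : H →ₗ[k] H) (ι₁ k H H)).comp Δ')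
        (TensorProduct.map ((ι₁ k H (H ⊗[k] H)).comp S)
          ((TensorProduct.map (LinearMap.id : H →ₗ[k] H) (ι₂ k H H)).comp Δ'))).comp
      ((TensorProduct.map (LinearMap.id : H →ₗ[k] H) Δ).comp Δ))

/-- A Hopf brace on the `k`-algebra `H` : two Hopf algebra structures sharing the
multiplication and unit of `H`, subject to the compatibility condition (2.1):
`h_{1'} ⊗ h_{2'1} ⊗ h_{2'2} = h_{11'}S(h_2)h_{31'} ⊗ h_{12'} ⊗ h_{32'}`. -/
structure HopfBrace (H : Type*) [Ring H] [Algebra k H] where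
  fst : HopfStruct k H
  snd : HopfStruct k H
  compat : ∀ h : H,
    braceLHS k H fst.Δ snd.Δ h = braceRHS k H fst.Δ snd.Δ fst.S h

/-- The coaction `ρ(h) = S(h_1) h_{21'} ⊗ h_{22'}` of Lemma 2.5. -/
def ρmap (H : Type*) [Ring H] [Algebra k H] (Δ Δ' : H →ₗ[k] H ⊗[k] H)
    (S : H →ₗ[k] H) : H →ₗ[k] H ⊗[k] H :=
  (LinearMap.mul' k (H ⊗[k] H)).comp
    ((TensorProduct.map ((ι₁ k H H).comp S) Δ').comp Δ)

/-- The coaction `φ(a) = (T(a_{1'}))_{(-1)} a_{2'} ⊗ (T(a_{1'}))_{(0)} a_{3'}`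
of Lemma 2.8(2), where `x_{(-1)} ⊗ x_{(0)} = ρ(x)`. -/
def φmap (H : Type*) [Ring H] [Algebra k H] (Δ Δ' : H →ₗ[k] H ⊗[k] H)
    (S T : H →ₗ[k] H) : H →ₗ[k] H ⊗[k] H :=
  (LinearMap.mul' k (H ⊗[k] H)).comp
    ((TensorProduct.map ((ρmap k H Δ Δ' S).comp T)
        (LinearMap.id : H ⊗[k] H →ₗ[k] H ⊗[k] H)).comp
      ((TensorProduct.map (LinearMap.id : H →ₗ[k] H) Δ').comp Δ'))

/-- `ρ : A →ₗ H ⊗ A` is a coassociative counital left coaction of the coalgebra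
`(H, ΔH, εH)`. -/
def LeftCoaction (A H : Type*) [Ring A] [Algebra k A] [Ring H] [Algebra k H]
    (ΔH : H →ₗ[k] H ⊗[k] H) (εH : H →ₗ[k] k) (ρ : A →ₗ[k] H ⊗[k] A) : Prop :=
  (∀ a : A,
    TensorProduct.map (LinearMap.id : H →ₗ[k] H) ρ (ρ a)
      = TensorProduct.assoc k H H A
          (TensorProduct.map ΔH (LinearMap.id : A →ₗ[k] A) (ρ a))) ∧
  (∀ a : A,
    TensorProduct.lid k A (TensorProduct.map εH (LinearMap.id : A →ₗ[k] A) (ρ a)) = a)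

/-- `φ : H →ₗ H ⊗ A` is a coassociative counital right coaction of the coalgebra
`(A, ΔA, εA)`. -/
def RightCoaction (A H : Type*) [Ring A] [Algebra k A] [Ring H] [Algebra k H]
    (ΔA : A →ₗ[k] A ⊗[k] A) (εA : A →ₗ[k] k) (φ : H →ₗ[k] H ⊗[k] A) : Prop :=
  (∀ h : H,
    TensorProduct.map (LinearMap.id : H →ₗ[k] H) ΔA (φ h)
      = TensorProduct.assoc k H A A
          (TensorProduct.map φ (LinearMap.id : A →ₗ[k] A) (φ h))) ∧
  (∀ h : H,
    TensorProduct.rid k H (TensorProduct.map (LinearMap.id : H →ₗ[k] H) εA (φ h)) = h)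

/-- a linear map which is moreover multiplicative and unital. -/
def IsAlgebraMorphism (M N : Type*) [Ring M] [Algebra k M] [Ring N] [Algebra k N]
    (f : M →ₗ[k] N) : Prop :=
  (∀ a b : M, f (a * b) = f a * f b) ∧ f 1 = 1

/-- `a ↦ a_{1(-1)} a_{2(-1)} ⊗ a_{1(0)} ⊗ a_{2(0)}`, the right hand side of the
comodule coalgebra condition. -/
def comodCoalgRHS (A H : Type*) [Ring A] [Algebra k A] [Ring H] [Algebra k H]
    (ΔA : A →ₗ[k] A ⊗[k] A) (ρ : A →ₗ[k] H ⊗[k] A) :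
    A →ₗ[k] H ⊗[k] (A ⊗[k] A) :=
  (LinearMap.mul' k (H ⊗[k] (A ⊗[k] A))).comp
    ((TensorProduct.map
        ((TensorProduct.map (LinearMap.id : H →ₗ[k] H) (ι₁ k A A)).comp ρ)
        ((TensorProduct.map (LinearMap.id : H →ₗ[k] H) (ι₂ k A A)).comp ρ)).comp ΔA)

/-- The two conditions making a left `H`-comodule `(A, ρ)` a comodule coalgebra:
`a_{(-1)} ⊗ Δ(a_{(0)}) = a_{1(-1)} a_{2(-1)} ⊗ a_{1(0)} ⊗ a_{2(0)}` and
`a_{(-1)} ε(a_{(0)}) = ε(a) 1`. -/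
def IsComodCoalg (A H : Type*) [Ring A] [Algebra k A] [Ring H] [Algebra k H]
    (ΔA : A →ₗ[k] A ⊗[k] A) (εA : A →ₗ[k] k) (ρ : A →ₗ[k] H ⊗[k] A) : Prop :=
  (∀ a : A,
    TensorProduct.map (LinearMap.id : H →ₗ[k] H) ΔA (ρ a)
      = comodCoalgRHS k A H ΔA ρ a) ∧
  (∀ a : A,
    TensorProduct.rid k H (TensorProduct.map (LinearMap.id : H →ₗ[k] H) εA (ρ a))
      = algebraMap k H (εA a))

/-- `a ↦ a_{1(-1)} a_{2(-1)[0]} ⊗ a_{1(0)} a_{2(-1)[1]} ⊗ a_{2(0)}`, the right hand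
side of (HM2). -/
def HM2RHS (A H : Type*) [Ring A] [Algebra k A] [Ring H] [Algebra k H]
    (ΔA : A →ₗ[k] A ⊗[k] A) (ρ : A →ₗ[k] H ⊗[k] A) (φ : H →ₗ[k] H ⊗[k] A) :
    A →ₗ[k] H ⊗[k] (A ⊗[k] A) :=
  (LinearMap.mul' k (H ⊗[k] (A ⊗[k] A))).comp
    ((TensorProduct.map
        ((TensorProduct.map (LinearMap.id : H →ₗ[k] H) (ι₁ k A A)).comp ρ)
        ((TensorProduct.assoc k H A A).toLinearMap.comp
          ((TensorProduct.map φ (LinearMap.id : A →ₗ[k] A)).comp ρ))).comp ΔA)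

/-- `h ↦ h_{1[0]} ⊗ h_{1[1](-1)} h_{2[0]} ⊗ h_{1[1](0)} h_{2[1]}`, the right hand
side of (HM3). -/
def HM3RHS (A H : Type*) [Ring A] [Algebra k A] [Ring H] [Algebra k H]
    (ΔH : H →ₗ[k] H ⊗[k] H) (ρ : A →ₗ[k] H ⊗[k] A) (φ : H →ₗ[k] H ⊗[k] A) :
    H →ₗ[k] H ⊗[k] (H ⊗[k] A) :=
  (LinearMap.mul' k (H ⊗[k] (H ⊗[k] A))).comp
    ((TensorProduct.map
        ((TensorProduct.map (LinearMap.id : H →ₗ[k] H) ρ).comp φ)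
        ((ι₂ k H (H ⊗[k] A)).comp φ)).comp ΔH)

/-- A Hopf matched pair `(A, H)` (Definition 3.1): `ρ` makes `A` a left
`H`-comodule algebra, `φ` makes `H` a right `A`-comodule algebra, and the
compatibility conditions (HM1)–(HM4) hold. -/
def IsHopfMatchedPair (A H : Type*) [Ring A] [Algebra k A] [Ring H] [Algebra k H]
    (ΔA : A →ₗ[k] A ⊗[k] A) (εA : A →ₗ[k] k)
    (ΔH : H →ₗ[k] H ⊗[k] H) (εH : H →ₗ[k] k)
    (ρ : A →ₗ[k] H ⊗[k] A) (φ : H →ₗ[k] H ⊗[k] A) : Prop :=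
  LeftCoaction k A H ΔH εH ρ ∧
  IsAlgebraMorphism k A (H ⊗[k] A) ρ ∧
  RightCoaction k A H ΔA εA φ ∧
  IsAlgebraMorphism k H (H ⊗[k] A) φ ∧
  -- (HM1)
  (∀ a : A,
    TensorProduct.rid k H (TensorProduct.map (LinearMap.id : H →ₗ[k] H) εA (ρ a))
      = algebraMap k H (εA a)) ∧
  (∀ h : H,
    TensorProduct.lid k A (TensorProduct.map εH (LinearMap.id : A →ₗ[k] A) (φ h))
      = algebraMap k A (εH h)) ∧
  -- (HM2)
  (∀ a : A,
    TensorProduct.map (LinearMap.id : H →ₗ[k] H) ΔA (ρ a) = HM2RHS k A H ΔA ρ φ a) ∧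
  -- (HM3)
  (∀ h : H,
    TensorProduct.assoc k H H A
        (TensorProduct.map ΔH (LinearMap.id : A →ₗ[k] A) (φ h))
      = HM3RHS k A H ΔH ρ φ h) ∧
  -- (HM4)
  (∀ (a : A) (h : H), φ h * ρ a = ρ a * φ h)

/-- Equation (3.2): `Δ(a) = a_{1'} T(a_{2'(-1)}) ⊗ a_{2'(0)}`. -/
def Δfromρ (A : Type*) [Ring A] [Algebra k A] (Δ' : A →ₗ[k] A ⊗[k] A)
    (T : A →ₗ[k] A) (ρ : A →ₗ[k] A ⊗[k] A) : A →ₗ[k] A ⊗[k] A :=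
  (LinearMap.mul' k (A ⊗[k] A)).comp
    ((TensorProduct.map (ι₁ k A A)
        ((TensorProduct.map T (LinearMap.id : A →ₗ[k] A)).comp ρ)).comp Δ')

/-- Equation (3.3): `S(a) = a_{(-1)} T(a_{(0)})`. -/
def Sfromρ (A : Type*) [Ring A] [Algebra k A] (T : A →ₗ[k] A)
    (ρ : A →ₗ[k] A ⊗[k] A) : A →ₗ[k] A :=
  (LinearMap.mul' k A).comp
    ((TensorProduct.map (LinearMap.id : A →ₗ[k] A) T).comp ρ)

/-- The comultiplication `Δ_R(h) = R · Δ(h) · R⁻¹` obtained by conjugating `Δ` with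
an invertible element `R ∈ H ⊗ H`. -/
def conjComul (H : Type*) [Ring H] [Algebra k H] (R Rinv : H ⊗[k] H)
    (Δ : H →ₗ[k] H ⊗[k] H) : H →ₗ[k] H ⊗[k] H :=
  (LinearMap.mulLeft k R).comp ((LinearMap.mulRight k Rinv).comp Δ)

/-- The braiding candidate `c(x ⊗ y) = x_{(-1)} y_{[0]} ⊗ x_{(0)} y_{[1]}` of
Proposition 2.9, i.e. `c = mult ∘ (ρ ⊗ φ)`. -/
def cmap (A : Type*) [Ring A] [Algebra k A] (Δ Δ' : A →ₗ[k] A ⊗[k] A)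
    (S T : A →ₗ[k] A) : A ⊗[k] A →ₗ[k] A ⊗[k] A :=
  (LinearMap.mul' k (A ⊗[k] A)).comp
    (TensorProduct.map (ρmap k A Δ Δ' S) (φmap k A Δ Δ' S T))

/-- `γ(x ⊗ y) = x y_{(-1)} ⊗ y_{(0)}` for a coaction `ρ(y) = y_{(-1)} ⊗ y_{(0)}`. -/
def γmap (A : Type*) [Ring A] [Algebra k A] (ρ : A →ₗ[k] A ⊗[k] A) :
    A ⊗[k] A →ₗ[k] A ⊗[k] A :=
  (LinearMap.mul' k (A ⊗[k] A)).comp (TensorProduct.map (ι₁ k A A) ρ)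

/-- `σ(x ⊗ y) = y_2 ⊗ x S(y_1) y_3`. -/
def σmap (A : Type*) [Ring A] [Algebra k A] (Δ : A →ₗ[k] A ⊗[k] A)
    (S : A →ₗ[k] A) : A ⊗[k] A →ₗ[k] A ⊗[k] A :=
  (mul₄ k (A ⊗[k] A)).comp
    ((TensorProduct.map (ι₂ k A A)
        (TensorProduct.map ((ι₂ k A A).comp S)
          (TensorProduct.map (ι₁ k A A) (ι₂ k A A)))).comp
      (TensorProduct.map (LinearMap.id : A →ₗ[k] A)
        ((TensorProduct.map (LinearMap.id : A →ₗ[k] A) Δ).comp Δ)))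

/-- The usual tensor product comultiplication `Δ̂` on `A ⊗ H`:
`a ⊗ h ↦ (a_1 ⊗ h_1) ⊗ (a_2 ⊗ h_2)`. -/
def hatΔ (A H : Type*) [Ring A] [Algebra k A] [Ring H] [Algebra k H]
    (ΔA : A →ₗ[k] A ⊗[k] A) (ΔH : H →ₗ[k] H ⊗[k] H) :
    A ⊗[k] H →ₗ[k] (A ⊗[k] H) ⊗[k] (A ⊗[k] H) :=
  (TensorProduct.tensorTensorTensorComm k A A H H).toLinearMap.comp
    (TensorProduct.map ΔA ΔH)

/-- The bicrossed coproduct comultiplication on `A ⊗ H`: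
`Δ̃(a ⊗ h) = a_1 ⊗ a_{2(-1)} h_{1[0]} ⊗ a_{2(0)} h_{1[1]} ⊗ h_2`. -/
def bicrossΔ (A H : Type*) [Ring A] [Algebra k A] [Ring H] [Algebra k H]
    (ΔA : A →ₗ[k] A ⊗[k] A) (ΔH : H →ₗ[k] H ⊗[k] H)
    (ρ : A →ₗ[k] H ⊗[k] A) (φ : H →ₗ[k] H ⊗[k] A) :
    A ⊗[k] H →ₗ[k] (A ⊗[k] H) ⊗[k] (A ⊗[k] H) :=
  (LinearMap.mul' k ((A ⊗[k] H) ⊗[k] (A ⊗[k] H))).comp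
    (TensorProduct.map
      -- a ↦ (a_1 ⊗ a_{2(-1)}) ⊗ (a_{2(0)} ⊗ 1)
      ((TensorProduct.map (LinearMap.id : A ⊗[k] H →ₗ[k] A ⊗[k] H) (ι₁ k A H)).comp
        ((TensorProduct.assoc k A H A).symm.toLinearMap.comp
          ((TensorProduct.map (LinearMap.id : A →ₗ[k] A) ρ).comp ΔA)))
      -- h ↦ (1 ⊗ h_{1[0]}) ⊗ (h_{1[1]} ⊗ h_2)
      ((TensorProduct.map (ι₂ k A H) (LinearMap.id : A ⊗[k] H →ₗ[k] A ⊗[k] H)).comp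
        ((TensorProduct.assoc k H A H).toLinearMap.comp
          ((TensorProduct.map φ (LinearMap.id : H →ₗ[k] H)).comp ΔH))))

/-- The antipode of the bicrossed coproduct:
`S̃(a ⊗ h) = S_A(h_{[1]}) S_A(a_{(0)}) ⊗ S_H(h_{[0]}) S_H(a_{(-1)})`. -/
def bicrossS (A H : Type*) [Ring A] [Algebra k A] [Ring H] [Algebra k H]
    (SA : A →ₗ[k] A) (SH : H →ₗ[k] H)
    (ρ : A →ₗ[k] H ⊗[k] A) (φ : H →ₗ[k] H ⊗[k] A) :
    A ⊗[k] H →ₗ[k] A ⊗[k] H :=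
  (LinearMap.mul' k (A ⊗[k] H)).comp
    ((TensorProduct.map
        ((TensorProduct.map SA SH).comp ((TensorProduct.comm k H A).toLinearMap.comp φ))
        ((TensorProduct.map SA SH).comp ((TensorProduct.comm k H A).toLinearMap.comp ρ))).comp
      (TensorProduct.comm k A H).toLinearMap)

/-- The left hand side `h_{[0]} ⊗ h_{[1]1} ⊗ h_{[1]2}` of equation (4.1), where the
`A`-leg is comultiplied with `Δ'`. -/
def eq41LHS (A H : Type*) [Ring A] [Algebra k A] [Ring H] [Algebra k H]
    (Δ'A : A →ₗ[k] A ⊗[k] A) (φ : H →ₗ[k] H ⊗[k] A) :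
    H →ₗ[k] H ⊗[k] (A ⊗[k] A) :=
  (TensorProduct.map (LinearMap.id : H →ₗ[k] H) Δ'A).comp φ

/-- The right hand side `h_{1[0]} S(h_2) h_{3[0]} ⊗ h_{1[1]} ⊗ h_{3[1]}` of
equation (4.1). -/
def eq41RHS (A H : Type*) [Ring A] [Algebra k A] [Ring H] [Algebra k H]
    (ΔH : H →ₗ[k] H ⊗[k] H) (SH : H →ₗ[k] H) (φ : H →ₗ[k] H ⊗[k] A) :
    H →ₗ[k] H ⊗[k] (A ⊗[k] A) :=
  (mul₃ k (H ⊗[k] (A ⊗[k] A))).comp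
    ((TensorProduct.map
        ((TensorProduct.map (LinearMap.id : H →ₗ[k] H) (ι₁ k A A)).comp φ)
        (TensorProduct.map ((ι₁ k H (A ⊗[k] A)).comp SH)
          ((TensorProduct.map (LinearMap.id : H →ₗ[k] H) (ι₂ k A A)).comp φ))).comp
      ((TensorProduct.map (LinearMap.id : H →ₗ[k] H) ΔH).comp ΔH))

/-- `x ↦ x_{11'} S(x_2) ⊗ x_{12'} ⊗ 1 ∈ H ⊗ (H ⊗ A)`, an auxiliary map for
equations (4.2) and (4.3). -/
def LHmap (A H : Type*) [Ring A] [Algebra k A] [Ring H] [Algebra k H]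
    (ΔH Δ'H : H →ₗ[k] H ⊗[k] H) (SH : H →ₗ[k] H) :
    H →ₗ[k] H ⊗[k] (H ⊗[k] A) :=
  (LinearMap.mul' k (H ⊗[k] (H ⊗[k] A))).comp
    ((TensorProduct.map
        ((TensorProduct.map (LinearMap.id : H →ₗ[k] H) (ι₁ k H A)).comp Δ'H)
        ((ι₁ k H (H ⊗[k] A)).comp SH)).comp ΔH)

/-- The right hand side
`a_{(-1)11'} S(a_{(-1)2}) a_{(0)(-1)'} ⊗ a_{(-1)12'} ⊗ a_{(0)(0)'}` of
equation (4.2). -/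
def eq42RHS (A H : Type*) [Ring A] [Algebra k A] [Ring H] [Algebra k H]
    (ΔH Δ'H : H →ₗ[k] H ⊗[k] H) (SH : H →ₗ[k] H)
    (ρ ρ' : A →ₗ[k] H ⊗[k] A) :
    A →ₗ[k] H ⊗[k] (H ⊗[k] A) :=
  (LinearMap.mul' k (H ⊗[k] (H ⊗[k] A))).comp
    ((TensorProduct.map (LHmap k A H ΔH Δ'H SH)
        ((TensorProduct.map (LinearMap.id : H →ₗ[k] H) (ι₂ k H A)).comp ρ')).comp ρ)

/-- The right hand side
`h_{1[0]11'} S(h_{1[0]2}) h_{1[1](-1)'} h_2 ⊗ h_{1[0]12'} ⊗ h_{1[1](0)'}` of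
equation (4.3). -/
def eq43RHS (A H : Type*) [Ring A] [Algebra k A] [Ring H] [Algebra k H]
    (ΔH Δ'H : H →ₗ[k] H ⊗[k] H) (SH : H →ₗ[k] H)
    (ρ' : A →ₗ[k] H ⊗[k] A) (φ : H →ₗ[k] H ⊗[k] A) :
    H →ₗ[k] H ⊗[k] (H ⊗[k] A) :=
  (LinearMap.mul' k (H ⊗[k] (H ⊗[k] A))).comp
    ((TensorProduct.map
        ((LinearMap.mul' k (H ⊗[k] (H ⊗[k] A))).comp
          ((TensorProduct.map (LHmap k A H ΔH Δ'H SH)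
              ((TensorProduct.map (LinearMap.id : H →ₗ[k] H) (ι₂ k H A)).comp ρ')).comp φ))
        (ι₁ k H (H ⊗[k] A))).comp ΔH)

section ConvAux
set_option synthInstance.maxHeartbeats 400000

variable {k : Type*} [Field k] {H : Type*} [Ring H] [Algebra k H]

/-- convolution product of two linear maps with respect to a comultiplication `Δc`. -/
def conv (Δc : H →ₗ[k] H ⊗[k] H) {L : Type*} [Ring L] [Algebra k L]
    (f g : H →ₗ[k] L) : H →ₗ[k] L :=
  (LinearMap.mul' k L) ∘ₗ (TensorProduct.map f g) ∘ₗ Δc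

lemma conv_apply (Δc : H →ₗ[k] H ⊗[k] H) {L : Type*} [Ring L] [Algebra k L]
    (f g : H →ₗ[k] L) (h : H) :
    conv Δc f g h = LinearMap.mul' k L (TensorProduct.map f g (Δc h)) := rfl

lemma p_mul' {L L' : Type*} [Ring L] [Algebra k L] [Ring L'] [Algebra k L']
    (p : L →ₗ[k] L') (hp : ∀ a b, p (a * b) = p a * p b) (t : L ⊗[k] L) :
    p (LinearMap.mul' k L t) = LinearMap.mul' k L' (TensorProduct.map p p t) := by
  induction t using TensorProduct.induction_on with
  | zero => simp
  | tmul a b => simp [hp]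
  | add x y hx hy => simp [hx, hy]

lemma conv_push (Δc : H →ₗ[k] H ⊗[k] H) {L L' : Type*} [Ring L] [Algebra k L]
    [Ring L'] [Algebra k L'] (f g : H →ₗ[k] L) (p : L →ₗ[k] L')
    (hp : ∀ a b, p (a * b) = p a * p b) :
    p ∘ₗ conv Δc f g = conv Δc (p ∘ₗ f) (p ∘ₗ g) := by
  apply LinearMap.ext; intro h
  simp only [LinearMap.comp_apply, conv_apply, p_mul' p hp]
  congr 1
  have : TensorProduct.map p p ∘ₗ TensorProduct.map f g
      = TensorProduct.map (p ∘ₗ f) (p ∘ₗ g) := by rw [← TensorProduct.map_comp]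
  exact (LinearMap.congr_fun this (Δc h))

lemma map_mul_map {M N M' N' : Type*} [Ring M] [Algebra k M] [Ring N] [Algebra k N]
    [Ring M'] [Algebra k M'] [Ring N'] [Algebra k N']
    (f : M →ₗ[k] M') (g : N →ₗ[k] N')
    (hf : ∀ a b, f (a * b) = f a * f b) (hg : ∀ a b, g (a * b) = g a * g b) :
    ∀ a b : M ⊗[k] N, TensorProduct.map f g (a * b)
      = TensorProduct.map f g a * TensorProduct.map f g b := by
  intro a b
  induction a using TensorProduct.induction_on with
  | zero => simp
  | add u v hu hv => simp [add_mul, hu, hv]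
  | tmul x y =>
    induction b using TensorProduct.induction_on with
    | zero => simp
    | add u v hu hv => simp [mul_add, hu, hv]
    | tmul x' y' =>
      simp [Algebra.TensorProduct.tmul_mul_tmul, hf, hg]

lemma conv_conv (HS : HopfStruct k H) {L : Type*} [Ring L] [Algebra k L]
    (f g p : H →ₗ[k] L) :
    conv HS.Δ f (conv HS.Δ g p)
      = mul₃ k L ∘ₗ (TensorProduct.map f (TensorProduct.map g p))
          ∘ₗ ((TensorProduct.map (LinearMap.id : H →ₗ[k] H) HS.Δ) ∘ₗ HS.Δ) := by
  apply LinearMap.ext; intro h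
  simp only [LinearMap.comp_apply, conv_apply, mul₃]
  generalize HS.Δ h = t
  induction t using TensorProduct.induction_on with
  | zero => simp
  | tmul x y => simp [conv_apply, mul₃]
  | add u v hu hv => simp [hu, hv]

lemma conv_conv' (HS : HopfStruct k H) {L : Type*} [Ring L] [Algebra k L]
    (f g p : H →ₗ[k] L) :
    conv HS.Δ (conv HS.Δ f g) p
      = mul₃ k L ∘ₗ (TensorProduct.map f (TensorProduct.map g p))
          ∘ₗ ((TensorProduct.map (LinearMap.id : H →ₗ[k] H) HS.Δ) ∘ₗ HS.Δ) := by
  apply LinearMap.ext; intro h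
  simp only [LinearMap.comp_apply, conv_apply]
  rw [HS.coassoc h]
  generalize HS.Δ h = t
  induction t using TensorProduct.induction_on with
  | zero => simp
  | tmul x y =>
    simp only [TensorProduct.map_tmul, LinearMap.id_coe, id_eq, conv_apply]
    generalize HS.Δ x = u
    induction u using TensorProduct.induction_on with
    | zero => simp
    | tmul a b =>
      simp [mul₃, mul_assoc]
    | add u v hu hv =>
      simp only [map_add, TensorProduct.add_tmul, LinearMap.add_apply, add_mul] at *
      rw [hu, hv]
  | add u v hu hv => simp only [map_add] at *; rw [hu, hv]

lemma conv_assoc (HS : HopfStruct k H) {L : Type*} [Ring L] [Algebra k L]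
    (f g p : H →ₗ[k] L) :
    conv HS.Δ (conv HS.Δ f g) p = conv HS.Δ f (conv HS.Δ g p) :=
  (conv_conv' HS f g p).trans (conv_conv HS f g p).symm

lemma conv_one_left (HS : HopfStruct k H) {L : Type*} [Ring L] [Algebra k L]
    (f : H →ₗ[k] L) :
    conv HS.Δ ((Algebra.linearMap k L) ∘ₗ HS.ε) f = f := by
  apply LinearMap.ext; intro h
  have key : ∀ t : H ⊗[k] H,
      LinearMap.mul' k L
        (TensorProduct.map ((Algebra.linearMap k L) ∘ₗ HS.ε) f t)
      = f (TensorProduct.lid k H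
          (TensorProduct.map HS.ε (LinearMap.id : H →ₗ[k] H) t)) := by
    intro t
    induction t using TensorProduct.induction_on with
    | zero => simp
    | tmul x y =>
      simp only [TensorProduct.map_tmul, LinearMap.comp_apply, Algebra.linearMap_apply,
        LinearMap.mul'_apply, TensorProduct.lid_tmul, LinearMap.id_coe, id_eq, map_smul]
      rw [Algebra.smul_def]
    | add u v hu hv => simp [hu, hv]
  rw [conv_apply, key (HS.Δ h), HS.counit_left h]

lemma conv_one_right (HS : HopfStruct k H) {L : Type*} [Ring L] [Algebra k L]
    (f : H →ₗ[k] L) :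
    conv HS.Δ f ((Algebra.linearMap k L) ∘ₗ HS.ε) = f := by
  apply LinearMap.ext; intro h
  have key : ∀ t : H ⊗[k] H,
      LinearMap.mul' k L
        (TensorProduct.map f ((Algebra.linearMap k L) ∘ₗ HS.ε) t)
      = f (TensorProduct.rid k H
          (TensorProduct.map (LinearMap.id : H →ₗ[k] H) HS.ε t)) := by
    intro t
    induction t using TensorProduct.induction_on with
    | zero => simp
    | tmul x y =>
      simp only [TensorProduct.map_tmul, LinearMap.comp_apply, Algebra.linearMap_apply,
        LinearMap.mul'_apply, TensorProduct.rid_tmul, LinearMap.id_coe, id_eq, map_smul]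
      rw [Algebra.smul_def, Algebra.commutes]
    | add u v hu hv => simp [hu, hv]
  rw [conv_apply, key (HS.Δ h), HS.counit_right h]

end ConvAux
section Contractions
set_option synthInstance.maxHeartbeats 400000

variable {k : Type*} [Field k] {H : Type*} [Ring H] [Algebra k H]

/-- contraction of the first tensor factor with a counit candidate. -/
def cLm (e : H →ₗ[k] k) : H ⊗[k] H →ₗ[k] H :=
  (TensorProduct.lid k H).toLinearMap ∘ₗ TensorProduct.map e LinearMap.id

/-- contraction of the second tensor factor with a counit candidate. -/
def cRm (e : H →ₗ[k] k) : H ⊗[k] H →ₗ[k] H :=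
  (TensorProduct.rid k H).toLinearMap ∘ₗ TensorProduct.map LinearMap.id e

@[simp] lemma cLm_apply (e : H →ₗ[k] k) (x y : H) : cLm e (x ⊗ₜ[k] y) = e x • y := by
  simp [cLm]

@[simp] lemma cRm_apply (e : H →ₗ[k] k) (x y : H) : cRm e (x ⊗ₜ[k] y) = e y • x := by
  simp [cRm]

lemma cLm_mul (e : H →ₗ[k] k) (he : ∀ a b, e (a * b) = e a * e b) :
    ∀ a b : H ⊗[k] H, cLm e (a * b) = cLm e a * cLm e b := by
  intro a b
  induction a using TensorProduct.induction_on with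
  | zero => simp
  | add u v hu hv => simp [add_mul, hu, hv]
  | tmul x y =>
    induction b using TensorProduct.induction_on with
    | zero => simp
    | add u v hu hv => simp [mul_add, hu, hv]
    | tmul x' y' =>
      simp [Algebra.TensorProduct.tmul_mul_tmul, he, smul_smul, mul_comm]

lemma cRm_mul (e : H →ₗ[k] k) (he : ∀ a b, e (a * b) = e a * e b) :
    ∀ a b : H ⊗[k] H, cRm e (a * b) = cRm e a * cRm e b := by
  intro a b
  induction a using TensorProduct.induction_on with
  | zero => simp
  | add u v hu hv => simp [add_mul, hu, hv]
  | tmul x y =>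
    induction b using TensorProduct.induction_on with
    | zero => simp
    | add u v hu hv => simp [mul_add, hu, hv]
    | tmul x' y' =>
      simp [Algebra.TensorProduct.tmul_mul_tmul, he, smul_smul, mul_comm]

@[simp] lemma ι₁_apply (x : H) : ι₁ k H H x = x ⊗ₜ[k] (1 : H) := rfl

@[simp] lemma ι₂_apply (x : H) : ι₂ k H H x = (1 : H) ⊗ₜ[k] x := rfl

@[simp] lemma ι₁'_apply (x : H) : ι₁ k H (H ⊗[k] H) x = x ⊗ₜ[k] (1 : H ⊗[k] H) := rfl

lemma ι₁_mul : ∀ a b : H, ι₁ k H H (a * b) = ι₁ k H H a * ι₁ k H H b := by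
  intro a b; simp [Algebra.TensorProduct.tmul_mul_tmul]

lemma ι₂_mul : ∀ a b : H, ι₂ k H H (a * b) = ι₂ k H H a * ι₂ k H H b := by
  intro a b; simp [Algebra.TensorProduct.tmul_mul_tmul]

lemma id_mul : ∀ a b : H, (LinearMap.id : H →ₗ[k] H) (a * b)
    = (LinearMap.id : H →ₗ[k] H) a * (LinearMap.id : H →ₗ[k] H) b := fun _ _ => rfl

lemma assoc_mul : ∀ a b : (H ⊗[k] H) ⊗[k] H,
    (TensorProduct.assoc k H H H) (a * b)
      = (TensorProduct.assoc k H H H) a * (TensorProduct.assoc k H H H) b := by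
  intro a b
  induction a using TensorProduct.induction_on with
  | zero => simp
  | add u v hu hv => simp [add_mul, hu, hv]
  | tmul u z =>
    induction b using TensorProduct.induction_on with
    | zero => simp
    | add p q hp hq => simp [mul_add, hp, hq]
    | tmul p w =>
      induction u using TensorProduct.induction_on with
      | zero => simp
      | add u1 u2 h1 h2 =>
        simp only [TensorProduct.add_tmul, add_mul, map_add] at *
        rw [h1, h2]
      | tmul x y =>
        induction p using TensorProduct.induction_on with
        | zero => simp
        | add p1 p2 h1 h2 =>
          simp only [TensorProduct.add_tmul, mul_add, map_add] at *
          rw [h1, h2]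
        | tmul x' y' =>
          simp [Algebra.TensorProduct.tmul_mul_tmul]

lemma assoc_tmul_one : ∀ u : H ⊗[k] H,
    (TensorProduct.assoc k H H H) (u ⊗ₜ[k] (1 : H))
      = TensorProduct.map LinearMap.id (ι₁ k H H) u := by
  intro u
  induction u using TensorProduct.induction_on with
  | zero => simp
  | tmul x y => simp
  | add u v hu hv => simp only [TensorProduct.add_tmul, map_add] at *; rw [hu, hv]

end Contractions
section BraceAux
set_option synthInstance.maxHeartbeats 400000
set_option maxHeartbeats 1000000

variable {k : Type*} [Field k] {H : Type*} [Ring H] [Algebra k H]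

variable (HB : HopfBrace k H)

/-- `h ↦ S h ⊗ 1`. -/
def ιS : H →ₗ[k] H ⊗[k] H := ι₁ k H H ∘ₗ HB.fst.S

/-- `h ↦ h₁' ⊗ S h₂'`. -/
def Km : H →ₗ[k] H ⊗[k] H :=
  TensorProduct.map (LinearMap.id : H →ₗ[k] H) HB.fst.S ∘ₗ HB.snd.Δ

/-- `h ↦ h₁' ⊗ h₂' ⊗ 1`. -/
def A0 : H →ₗ[k] H ⊗[k] (H ⊗[k] H) :=
  TensorProduct.map (LinearMap.id : H →ₗ[k] H) (ι₁ k H H) ∘ₗ HB.snd.Δ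

/-- `h ↦ S h ⊗ 1 ⊗ 1`. -/
def B0 : H →ₗ[k] H ⊗[k] (H ⊗[k] H) := ι₁ k H (H ⊗[k] H) ∘ₗ HB.fst.S

/-- `h ↦ h₁' ⊗ 1 ⊗ h₂'`. -/
def C0 : H →ₗ[k] H ⊗[k] (H ⊗[k] H) :=
  TensorProduct.map (LinearMap.id : H →ₗ[k] H) (ι₂ k H H) ∘ₗ HB.snd.Δ

/-- `h ↦ h₁' ⊗ S h₂' ⊗ 1`. -/
def A2 : H →ₗ[k] H ⊗[k] (H ⊗[k] H) :=
  TensorProduct.map (LinearMap.id : H →ₗ[k] H) (ιS HB) ∘ₗ HB.snd.Δ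

/-- `h ↦ h₁' ⊗ h₂' ⊗ h₃'`. -/
def Dm : H →ₗ[k] H ⊗[k] (H ⊗[k] H) :=
  TensorProduct.map (LinearMap.id : H →ₗ[k] H) HB.snd.Δ ∘ₗ HB.snd.Δ

/-- the convolution unit `h ↦ ε(h) 1`. -/
def uE : H →ₗ[k] H := Algebra.linearMap k H ∘ₗ HB.fst.ε

/-- `h ↦ ε'(S h) 1`. -/
def uS : H →ₗ[k] H := Algebra.linearMap k H ∘ₗ HB.snd.ε ∘ₗ HB.fst.S

lemma rho_eq : ρmap k H HB.fst.Δ HB.snd.Δ HB.fst.S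
    = conv HB.fst.Δ (ιS HB) HB.snd.Δ := rfl

lemma S_antileft : conv HB.fst.Δ HB.fst.S (LinearMap.id : H →ₗ[k] H) = uE HB := by
  apply LinearMap.ext; intro h
  simpa [conv_apply, uE] using HB.fst.antipode_left h

lemma S_antiright : conv HB.fst.Δ (LinearMap.id : H →ₗ[k] H) HB.fst.S = uE HB := by
  apply LinearMap.ext; intro h
  simpa [conv_apply, uE] using HB.fst.antipode_right h

lemma cL_eps_Δ : cLm HB.fst.ε ∘ₗ HB.fst.Δ = LinearMap.id := by
  apply LinearMap.ext; intro h
  simpa [cLm] using HB.fst.counit_left h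

lemma cL_eps'_Δ' : cLm HB.snd.ε ∘ₗ HB.snd.Δ = LinearMap.id := by
  apply LinearMap.ext; intro h
  simpa [cLm] using HB.snd.counit_left h

lemma cR_eps'_Δ' : cRm HB.snd.ε ∘ₗ HB.snd.Δ = LinearMap.id := by
  apply LinearMap.ext; intro h
  simpa [cRm] using HB.snd.counit_right h

lemma brace_conv : (TensorProduct.map (LinearMap.id : H →ₗ[k] H) HB.fst.Δ) ∘ₗ HB.snd.Δ
    = conv HB.fst.Δ (A0 HB) (conv HB.fst.Δ (B0 HB) (C0 HB)) := by
  rw [conv_conv HB.fst]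
  exact LinearMap.ext HB.compat

lemma Δ'_unit : HB.snd.Δ ∘ₗ Algebra.linearMap k H = Algebra.linearMap k (H ⊗[k] H) := by
  apply LinearMap.ext; intro c
  simp [Algebra.linearMap_apply, Algebra.algebraMap_eq_smul_one, map_smul, HB.snd.comul_one]

lemma ι₁_unit : ι₁ k H H ∘ₗ Algebra.linearMap k H = Algebra.linearMap k (H ⊗[k] H) := by
  apply LinearMap.ext; intro c
  simp [Algebra.linearMap_apply, Algebra.algebraMap_eq_smul_one, map_smul,
    Algebra.TensorProduct.one_def]

lemma eps'_unit : HB.snd.ε ∘ₗ Algebra.linearMap k H = LinearMap.id := by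
  apply LinearMap.ext; intro c
  simp [Algebra.linearMap_apply, Algebra.algebraMap_eq_smul_one, map_smul, HB.snd.counit_one]

end BraceAux
section BraceAux2
set_option synthInstance.maxHeartbeats 400000
set_option maxHeartbeats 1000000

variable {k : Type*} [Field k] {H : Type*} [Ring H] [Algebra k H]

variable (HB : HopfBrace k H)

/-- `x ⊗ y ⊗ z ↦ ε'(x) ε(y) z`. -/
def Θm : H ⊗[k] (H ⊗[k] H) →ₗ[k] H :=
  cLm HB.snd.ε ∘ₗ TensorProduct.map (LinearMap.id : H →ₗ[k] H) (cLm HB.fst.ε)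

lemma Θm_mul : ∀ a b : H ⊗[k] (H ⊗[k] H), Θm HB (a * b) = Θm HB a * Θm HB b := by
  intro a b
  simp only [Θm, LinearMap.comp_apply]
  rw [map_mul_map (LinearMap.id : H →ₗ[k] H) (cLm HB.fst.ε) (id_mul)
      (cLm_mul HB.fst.ε HB.fst.counit_mul) a b,
    cLm_mul HB.snd.ε HB.snd.counit_mul]

lemma Θm_braceL : Θm HB ∘ₗ ((TensorProduct.map (LinearMap.id : H →ₗ[k] H) HB.fst.Δ)
    ∘ₗ HB.snd.Δ) = LinearMap.id := by
  have h1 : TensorProduct.map (LinearMap.id : H →ₗ[k] H) (cLm HB.fst.ε)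
      ∘ₗ TensorProduct.map (LinearMap.id : H →ₗ[k] H) HB.fst.Δ
      = LinearMap.id := by
    rw [← TensorProduct.map_comp, cL_eps_Δ, LinearMap.id_comp, TensorProduct.map_id]
  calc Θm HB ∘ₗ ((TensorProduct.map (LinearMap.id : H →ₗ[k] H) HB.fst.Δ) ∘ₗ HB.snd.Δ)
      = cLm HB.snd.ε ∘ₗ ((TensorProduct.map (LinearMap.id : H →ₗ[k] H) (cLm HB.fst.ε)
          ∘ₗ TensorProduct.map (LinearMap.id : H →ₗ[k] H) HB.fst.Δ) ∘ₗ HB.snd.Δ) := by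
        simp only [Θm, LinearMap.comp_assoc]
    _ = LinearMap.id := by rw [h1, LinearMap.id_comp, cL_eps'_Δ' HB]

lemma cL_eps_ι₁ : cLm HB.fst.ε ∘ₗ ι₁ k H H = Algebra.linearMap k H ∘ₗ HB.fst.ε := by
  apply LinearMap.ext; intro x
  simp [Algebra.algebraMap_eq_smul_one]

lemma cL_eps_ι₂ : cLm HB.fst.ε ∘ₗ ι₂ k H H = LinearMap.id := by
  apply LinearMap.ext; intro x
  simp [HB.fst.counit_one]

lemma cL_eps'_uE : cLm HB.snd.ε ∘ₗ TensorProduct.map (LinearMap.id : H →ₗ[k] H) (uE HB)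
    = uE HB ∘ₗ cLm HB.snd.ε := by
  apply TensorProduct.ext'; intro x y
  simp [uE, Algebra.linearMap_apply, map_smul, Algebra.algebraMap_eq_smul_one,
    smul_smul, mul_comm]

lemma Θm_A0 : Θm HB ∘ₗ A0 HB = uE HB := by
  have h1 : TensorProduct.map (LinearMap.id : H →ₗ[k] H) (cLm HB.fst.ε)
      ∘ₗ TensorProduct.map (LinearMap.id : H →ₗ[k] H) (ι₁ k H H)
      = TensorProduct.map (LinearMap.id : H →ₗ[k] H) (uE HB) := by
    rw [← TensorProduct.map_comp, LinearMap.id_comp]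
    rw [show cLm HB.fst.ε ∘ₗ ι₁ k H H = uE HB from cL_eps_ι₁ HB]
  calc Θm HB ∘ₗ A0 HB
      = cLm HB.snd.ε ∘ₗ ((TensorProduct.map (LinearMap.id : H →ₗ[k] H) (cLm HB.fst.ε)
          ∘ₗ TensorProduct.map (LinearMap.id : H →ₗ[k] H) (ι₁ k H H)) ∘ₗ HB.snd.Δ) := by
        simp only [Θm, A0, LinearMap.comp_assoc]
    _ = (cLm HB.snd.ε ∘ₗ TensorProduct.map (LinearMap.id : H →ₗ[k] H) (uE HB))
          ∘ₗ HB.snd.Δ := by rw [h1]; rfl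
    _ = uE HB ∘ₗ (cLm HB.snd.ε ∘ₗ HB.snd.Δ) := by
        rw [cL_eps'_uE]; simp only [LinearMap.comp_assoc]
    _ = uE HB := by rw [cL_eps'_Δ', LinearMap.comp_id]

lemma Θm_B0 : Θm HB ∘ₗ B0 HB = uS HB := by
  have h1 : Θm HB ∘ₗ ι₁ k H (H ⊗[k] H) = Algebra.linearMap k H ∘ₗ HB.snd.ε := by
    apply LinearMap.ext; intro x
    simp [Θm, Algebra.TensorProduct.one_def, HB.fst.counit_one,
      Algebra.algebraMap_eq_smul_one]
  calc Θm HB ∘ₗ B0 HB = (Θm HB ∘ₗ ι₁ k H (H ⊗[k] H)) ∘ₗ HB.fst.S := by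
        simp only [B0, LinearMap.comp_assoc]
    _ = uS HB := by rw [h1, uS, LinearMap.comp_assoc]

lemma Θm_C0 : Θm HB ∘ₗ C0 HB = LinearMap.id := by
  have h1 : TensorProduct.map (LinearMap.id : H →ₗ[k] H) (cLm HB.fst.ε)
      ∘ₗ TensorProduct.map (LinearMap.id : H →ₗ[k] H) (ι₂ k H H)
      = LinearMap.id := by
    rw [← TensorProduct.map_comp, LinearMap.id_comp, cL_eps_ι₂, TensorProduct.map_id]
  calc Θm HB ∘ₗ C0 HB
      = cLm HB.snd.ε ∘ₗ ((TensorProduct.map (LinearMap.id : H →ₗ[k] H) (cLm HB.fst.ε)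
          ∘ₗ TensorProduct.map (LinearMap.id : H →ₗ[k] H) (ι₂ k H H)) ∘ₗ HB.snd.Δ) := by
        simp only [Θm, C0, LinearMap.comp_assoc]
    _ = LinearMap.id := by rw [h1, LinearMap.id_comp, cL_eps'_Δ' HB]

lemma E5 : conv HB.fst.Δ (uS HB) (LinearMap.id : H →ₗ[k] H) = LinearMap.id := by
  have h2 : Θm HB ∘ₗ ((TensorProduct.map (LinearMap.id : H →ₗ[k] H) HB.fst.Δ)
      ∘ₗ HB.snd.Δ) = conv HB.fst.Δ (uS HB) (LinearMap.id : H →ₗ[k] H) := by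
    rw [brace_conv HB, conv_push HB.fst.Δ _ _ (Θm HB) (Θm_mul HB),
      conv_push HB.fst.Δ _ _ (Θm HB) (Θm_mul HB), Θm_A0, Θm_B0, Θm_C0]
    exact conv_one_left HB.fst _
  rw [← h2, Θm_braceL]

lemma eps_eq : HB.snd.ε = HB.fst.ε := by
  have e1 : HB.snd.ε ∘ₗ conv HB.fst.Δ (uS HB) (LinearMap.id : H →ₗ[k] H)
      = HB.snd.ε := by rw [E5, LinearMap.comp_id]
  have e2 : HB.snd.ε ∘ₗ uS HB = HB.snd.ε ∘ₗ HB.fst.S := by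
    rw [uS, ← LinearMap.comp_assoc, eps'_unit, LinearMap.id_comp]
  have e3 : HB.snd.ε ∘ₗ conv HB.fst.Δ (uS HB) (LinearMap.id : H →ₗ[k] H)
      = conv HB.fst.Δ (HB.snd.ε ∘ₗ HB.fst.S) HB.snd.ε := by
    rw [conv_push HB.fst.Δ _ _ HB.snd.ε HB.snd.counit_mul, e2, LinearMap.comp_id]
  have e4 : conv HB.fst.Δ (HB.snd.ε ∘ₗ HB.fst.S) HB.snd.ε = HB.fst.ε := by
    have p1 : HB.snd.ε ∘ₗ conv HB.fst.Δ HB.fst.S (LinearMap.id : H →ₗ[k] H)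
        = conv HB.fst.Δ (HB.snd.ε ∘ₗ HB.fst.S) HB.snd.ε := by
      rw [conv_push HB.fst.Δ _ _ HB.snd.ε HB.snd.counit_mul, LinearMap.comp_id]
    have p2 : HB.snd.ε ∘ₗ conv HB.fst.Δ HB.fst.S (LinearMap.id : H →ₗ[k] H)
        = HB.fst.ε := by
      rw [S_antileft, uE, ← LinearMap.comp_assoc, eps'_unit, LinearMap.id_comp]
    exact p1.symm.trans p2
  rw [← e4, ← e3, e1]

lemma R1 : TensorProduct.map (LinearMap.id : H →ₗ[k] H) (uE HB) ∘ₗ HB.snd.Δ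
    = ι₁ k H H := by
  have key : ∀ t : H ⊗[k] H,
      TensorProduct.map (LinearMap.id : H →ₗ[k] H)
        (Algebra.linearMap k H ∘ₗ HB.snd.ε) t
      = ι₁ k H H (TensorProduct.rid k H
          (TensorProduct.map (LinearMap.id : H →ₗ[k] H) HB.snd.ε t)) := by
    intro t
    induction t using TensorProduct.induction_on with
    | zero => simp
    | tmul x y =>
      simp [Algebra.linearMap_apply, Algebra.algebraMap_eq_smul_one,
        TensorProduct.tmul_smul, TensorProduct.smul_tmul']
    | add u v hu hv => simp [hu, hv, TensorProduct.add_tmul]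
  apply LinearMap.ext; intro h
  have : uE HB = Algebra.linearMap k H ∘ₗ HB.snd.ε := by rw [uE, eps_eq]
  rw [LinearMap.comp_apply, this, key (HB.snd.Δ h)]
  rw [HB.snd.counit_right h]

end BraceAux2
section BraceAux3
set_option synthInstance.maxHeartbeats 400000
set_option maxHeartbeats 1000000

variable {k : Type*} [Field k] {H : Type*} [Ring H] [Algebra k H]

variable (HB : HopfBrace k H)

/-- `x ⊗ y ⊗ z ↦ x ⊗ y S(z)`. -/
def Φ₁ : H ⊗[k] (H ⊗[k] H) →ₗ[k] H ⊗[k] H :=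
  TensorProduct.map (LinearMap.id : H →ₗ[k] H)
    (LinearMap.mul' k H ∘ₗ TensorProduct.map (LinearMap.id : H →ₗ[k] H) HB.fst.S)

/-- `x ⊗ y ⊗ z ↦ x ⊗ S(y) z`. -/
def Φ₂ : H ⊗[k] (H ⊗[k] H) →ₗ[k] H ⊗[k] H :=
  TensorProduct.map (LinearMap.id : H →ₗ[k] H)
    (LinearMap.mul' k H ∘ₗ TensorProduct.map HB.fst.S (LinearMap.id : H →ₗ[k] H))

lemma Phi1_step : Φ₁ HB ∘ₗ TensorProduct.map (LinearMap.id : H →ₗ[k] H) HB.fst.Δ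
    = TensorProduct.map (LinearMap.id : H →ₗ[k] H) (uE HB) := by
  rw [Φ₁, ← TensorProduct.map_comp, LinearMap.id_comp, LinearMap.comp_assoc]
  rw [show LinearMap.mul' k H ∘ₗ (TensorProduct.map (LinearMap.id : H →ₗ[k] H) HB.fst.S
    ∘ₗ HB.fst.Δ) = uE HB from S_antiright HB]

lemma Phi2_step : Φ₂ HB ∘ₗ TensorProduct.map (LinearMap.id : H →ₗ[k] H) HB.fst.Δ
    = TensorProduct.map (LinearMap.id : H →ₗ[k] H) (uE HB) := by
  rw [Φ₂, ← TensorProduct.map_comp, LinearMap.id_comp, LinearMap.comp_assoc]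
  rw [show LinearMap.mul' k H ∘ₗ (TensorProduct.map HB.fst.S (LinearMap.id : H →ₗ[k] H)
    ∘ₗ HB.fst.Δ) = uE HB from S_antileft HB]

lemma X1 : Φ₁ HB ∘ₗ (mul₃ k (H ⊗[k] (H ⊗[k] H)))
      ∘ₗ (TensorProduct.map (A0 HB) (TensorProduct.map (B0 HB) (C0 HB)))
    = mul₃ k (H ⊗[k] H)
      ∘ₗ TensorProduct.map HB.snd.Δ (TensorProduct.map (ιS HB) (Km HB)) := by
  apply TensorProduct.ext'; intro x t
  induction t using TensorProduct.induction_on with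
  | zero => simp
  | add u v hu hv => simp only [TensorProduct.tmul_add, map_add] at *; rw [hu, hv]
  | tmul y z =>
    simp only [LinearMap.comp_apply, TensorProduct.map_tmul, A0, B0, C0, Km, ιS,
      LinearMap.id_coe, id_eq, ι₁_apply, ι₁'_apply]
    generalize HB.snd.Δ x = u
    generalize HB.snd.Δ z = w
    induction u using TensorProduct.induction_on with
    | zero => simp [mul₃]
    | add u1 u2 h1 h2 =>
      simp only [map_add, TensorProduct.add_tmul] at *
      rw [h1, h2]
    | tmul a b =>
      induction w using TensorProduct.induction_on with
      | zero => simp [mul₃]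
      | add w1 w2 h1 h2 =>
        simp only [map_add, TensorProduct.tmul_add] at *
        rw [h1, h2]
      | tmul d e =>
        simp [mul₃, Φ₁, Algebra.TensorProduct.one_def,
          Algebra.TensorProduct.tmul_mul_tmul]

lemma X2 : Φ₂ HB ∘ₗ (mul₃ k (H ⊗[k] (H ⊗[k] H)))
      ∘ₗ (TensorProduct.map (A0 HB) (TensorProduct.map (B0 HB) (C0 HB)))
    = mul₃ k (H ⊗[k] H)
      ∘ₗ TensorProduct.map (Km HB) (TensorProduct.map (ιS HB) HB.snd.Δ) := by
  apply TensorProduct.ext'; intro x t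
  induction t using TensorProduct.induction_on with
  | zero => simp
  | add u v hu hv => simp only [TensorProduct.tmul_add, map_add] at *; rw [hu, hv]
  | tmul y z =>
    simp only [LinearMap.comp_apply, TensorProduct.map_tmul, A0, B0, C0, Km, ιS,
      LinearMap.id_coe, id_eq, ι₁_apply, ι₁'_apply]
    generalize HB.snd.Δ x = u
    generalize HB.snd.Δ z = w
    induction u using TensorProduct.induction_on with
    | zero => simp [mul₃]
    | add u1 u2 h1 h2 =>
      simp only [map_add, TensorProduct.add_tmul] at *
      rw [h1, h2]
    | tmul a b =>
      induction w using TensorProduct.induction_on with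
      | zero => simp [mul₃]
      | add w1 w2 h1 h2 =>
        simp only [map_add, TensorProduct.tmul_add] at *
        rw [h1, h2]
      | tmul d e =>
        simp [mul₃, Φ₂, Algebra.TensorProduct.one_def,
          Algebra.TensorProduct.tmul_mul_tmul]

lemma c1 : conv HB.fst.Δ (conv HB.fst.Δ HB.snd.Δ (ιS HB)) (Km HB) = ι₁ k H H := by
  apply LinearMap.ext; intro h
  rw [conv_conv' HB.fst]
  have t := TensorProduct.map (LinearMap.id : H →ₗ[k] H) HB.fst.Δ (HB.fst.Δ h)
  have e1 := LinearMap.congr_fun (X1 HB)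
    (TensorProduct.map (LinearMap.id : H →ₗ[k] H) HB.fst.Δ (HB.fst.Δ h))
  simp only [LinearMap.comp_apply] at e1 ⊢
  rw [← e1]
  have e2 := LinearMap.congr_fun (conv_conv HB.fst (A0 HB) (B0 HB) (C0 HB)) h
  simp only [LinearMap.comp_apply] at e2
  rw [← e2]
  have e3 := LinearMap.congr_fun (brace_conv HB) h
  simp only [LinearMap.comp_apply] at e3
  rw [← e3]
  have e4 := LinearMap.congr_fun (Phi1_step HB) (HB.snd.Δ h)
  simp only [LinearMap.comp_apply] at e4
  rw [e4]
  exact LinearMap.congr_fun (R1 HB) h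

lemma c2 : conv HB.fst.Δ (Km HB) (conv HB.fst.Δ (ιS HB) HB.snd.Δ) = ι₁ k H H := by
  apply LinearMap.ext; intro h
  rw [conv_conv HB.fst]
  have e1 := LinearMap.congr_fun (X2 HB)
    (TensorProduct.map (LinearMap.id : H →ₗ[k] H) HB.fst.Δ (HB.fst.Δ h))
  simp only [LinearMap.comp_apply] at e1 ⊢
  rw [← e1]
  have e2 := LinearMap.congr_fun (conv_conv HB.fst (A0 HB) (B0 HB) (C0 HB)) h
  simp only [LinearMap.comp_apply] at e2
  rw [← e2]
  have e3 := LinearMap.congr_fun (brace_conv HB) h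
  simp only [LinearMap.comp_apply] at e3
  rw [← e3]
  have e4 := LinearMap.congr_fun (Phi2_step HB) (HB.snd.Δ h)
  simp only [LinearMap.comp_apply] at e4
  rw [e4]
  exact LinearMap.congr_fun (R1 HB) h

end BraceAux3
section BraceAux4
set_option synthInstance.maxHeartbeats 400000
set_option maxHeartbeats 1000000

variable {k : Type*} [Field k] {H : Type*} [Ring H] [Algebra k H]

variable (HB : HopfBrace k H)

/-- the convolution unit of `Hom(H, H ⊗ H)`. -/
def uE2 : H →ₗ[k] H ⊗[k] H := Algebra.linearMap k (H ⊗[k] H) ∘ₗ HB.fst.ε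

/-- the candidate for `Δ' ∘ S`. -/
def Fm : H →ₗ[k] H ⊗[k] H :=
  conv HB.fst.Δ (ιS HB) (conv HB.fst.Δ (Km HB) (ιS HB))

lemma inv1 : conv HB.fst.Δ (HB.snd.Δ ∘ₗ HB.fst.S) HB.snd.Δ = uE2 HB := by
  have h := conv_push HB.fst.Δ HB.fst.S (LinearMap.id : H →ₗ[k] H)
    HB.snd.Δ HB.snd.comul_mul
  rw [S_antileft, LinearMap.comp_id] at h
  rw [← h, uE, ← LinearMap.comp_assoc, Δ'_unit, uE2]

lemma conv_iS_i1 : conv HB.fst.Δ (ιS HB) (ι₁ k H H) = uE2 HB := by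
  have h := conv_push HB.fst.Δ HB.fst.S (LinearMap.id : H →ₗ[k] H)
    (ι₁ k H H) ι₁_mul
  rw [S_antileft, LinearMap.comp_id] at h
  rw [show conv HB.fst.Δ (ι₁ k H H ∘ₗ HB.fst.S) (ι₁ k H H)
      = conv HB.fst.Δ (ιS HB) (ι₁ k H H) from rfl] at h
  rw [← h, uE, ← LinearMap.comp_assoc, ι₁_unit, uE2]

lemma conv_i1_iS : conv HB.fst.Δ (ι₁ k H H) (ιS HB) = uE2 HB := by
  have h := conv_push HB.fst.Δ (LinearMap.id : H →ₗ[k] H) HB.fst.S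
    (ι₁ k H H) ι₁_mul
  rw [S_antiright, LinearMap.comp_id] at h
  rw [show conv HB.fst.Δ (ι₁ k H H) (ι₁ k H H ∘ₗ HB.fst.S)
      = conv HB.fst.Δ (ι₁ k H H) (ιS HB) from rfl] at h
  rw [← h, uE, ← LinearMap.comp_assoc, ι₁_unit, uE2]

lemma FΔ' : conv HB.fst.Δ (Fm HB) HB.snd.Δ = uE2 HB := by
  rw [Fm, conv_assoc HB.fst, conv_assoc HB.fst, c2, conv_iS_i1]

lemma Δ'F : conv HB.fst.Δ HB.snd.Δ (Fm HB) = uE2 HB := by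
  rw [Fm, ← conv_assoc HB.fst, ← conv_assoc HB.fst, c1, conv_i1_iS]

lemma L1 : HB.snd.Δ ∘ₗ HB.fst.S = Fm HB := by
  calc HB.snd.Δ ∘ₗ HB.fst.S
      = conv HB.fst.Δ (HB.snd.Δ ∘ₗ HB.fst.S) (uE2 HB) :=
        (conv_one_right HB.fst _).symm
    _ = conv HB.fst.Δ (HB.snd.Δ ∘ₗ HB.fst.S) (conv HB.fst.Δ HB.snd.Δ (Fm HB)) := by
        rw [Δ'F]
    _ = conv HB.fst.Δ (conv HB.fst.Δ (HB.snd.Δ ∘ₗ HB.fst.S) HB.snd.Δ) (Fm HB) :=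
        (conv_assoc HB.fst _ _ _).symm
    _ = conv HB.fst.Δ (uE2 HB) (Fm HB) := by rw [inv1]
    _ = Fm HB := conv_one_left HB.fst _

lemma mapidi1_iS : TensorProduct.map (LinearMap.id : H →ₗ[k] H) (ι₁ k H H) ∘ₗ ιS HB
    = B0 HB := by
  apply LinearMap.ext; intro x
  simp [ιS, B0, Algebra.TensorProduct.one_def]

lemma mapidi2_iS : TensorProduct.map (LinearMap.id : H →ₗ[k] H) (ι₂ k H H) ∘ₗ ιS HB
    = B0 HB := by
  apply LinearMap.ext; intro x
  simp [ιS, B0, Algebra.TensorProduct.one_def]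

lemma mapidΔ_iS : TensorProduct.map (LinearMap.id : H →ₗ[k] H) HB.fst.Δ ∘ₗ ιS HB
    = B0 HB := by
  apply LinearMap.ext; intro x
  simp [ιS, B0, HB.fst.comul_one]

lemma mapidi1_K : TensorProduct.map (LinearMap.id : H →ₗ[k] H) (ι₁ k H H) ∘ₗ Km HB
    = A2 HB := by
  rw [Km, A2, ← LinearMap.comp_assoc, ← TensorProduct.map_comp]
  rfl

end BraceAux4
section BraceAux5
set_option synthInstance.maxHeartbeats 400000
set_option maxHeartbeats 1000000

variable {k : Type*} [Field k] {H : Type*} [Ring H] [Algebra k H]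

variable (HB : HopfBrace k H)

lemma G3map : TensorProduct.map (LinearMap.id : H →ₗ[k] H) HB.fst.Δ
      ∘ₗ ρmap k H HB.fst.Δ HB.snd.Δ HB.fst.S
    = comodCoalgRHS k H H HB.fst.Δ (ρmap k H HB.fst.Δ HB.snd.Δ HB.fst.S) := by
  rw [rho_eq]
  have hL : TensorProduct.map (LinearMap.id : H →ₗ[k] H) HB.fst.Δ
      ∘ₗ conv HB.fst.Δ (ιS HB) HB.snd.Δ
      = conv HB.fst.Δ (B0 HB) (conv HB.fst.Δ (A0 HB) (conv HB.fst.Δ (B0 HB) (C0 HB))) := by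
    rw [conv_push HB.fst.Δ _ _ _
        (map_mul_map (LinearMap.id : H →ₗ[k] H) HB.fst.Δ id_mul HB.fst.comul_mul),
      mapidΔ_iS, brace_conv]
  have h1 : TensorProduct.map (LinearMap.id : H →ₗ[k] H) (ι₁ k H H)
      ∘ₗ conv HB.fst.Δ (ιS HB) HB.snd.Δ = conv HB.fst.Δ (B0 HB) (A0 HB) := by
    rw [conv_push HB.fst.Δ _ _ _
        (map_mul_map (LinearMap.id : H →ₗ[k] H) (ι₁ k H H) id_mul ι₁_mul),
      mapidi1_iS]
    rfl
  have h2 : TensorProduct.map (LinearMap.id : H →ₗ[k] H) (ι₂ k H H)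
      ∘ₗ conv HB.fst.Δ (ιS HB) HB.snd.Δ = conv HB.fst.Δ (B0 HB) (C0 HB) := by
    rw [conv_push HB.fst.Δ _ _ _
        (map_mul_map (LinearMap.id : H →ₗ[k] H) (ι₂ k H H) id_mul ι₂_mul),
      mapidi2_iS]
    rfl
  have hR : comodCoalgRHS k H H HB.fst.Δ (conv HB.fst.Δ (ιS HB) HB.snd.Δ)
      = conv HB.fst.Δ
          (TensorProduct.map (LinearMap.id : H →ₗ[k] H) (ι₁ k H H)
            ∘ₗ conv HB.fst.Δ (ιS HB) HB.snd.Δ)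
          (TensorProduct.map (LinearMap.id : H →ₗ[k] H) (ι₂ k H H)
            ∘ₗ conv HB.fst.Δ (ιS HB) HB.snd.Δ) := rfl
  rw [hL, hR, h1, h2, conv_assoc HB.fst]

/-- `x ⊗ y ⊗ z ↦ x ⊗ ρ'(y ⊗ z)` with `ρ'(y ⊗ z) = (S y ⊗ 1)Δ'(z)`. -/
def Ψm : H ⊗[k] (H ⊗[k] H) →ₗ[k] H ⊗[k] (H ⊗[k] H) :=
  TensorProduct.map (LinearMap.id : H →ₗ[k] H)
    (LinearMap.mul' k (H ⊗[k] H) ∘ₗ TensorProduct.map (ιS HB) HB.snd.Δ)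

lemma X3 : Ψm HB ∘ₗ (mul₃ k (H ⊗[k] (H ⊗[k] H)))
      ∘ₗ (TensorProduct.map (A0 HB) (TensorProduct.map (B0 HB) (C0 HB)))
    = mul₃ k (H ⊗[k] (H ⊗[k] H))
      ∘ₗ TensorProduct.map (A2 HB) (TensorProduct.map (B0 HB) (Dm HB)) := by
  apply TensorProduct.ext'; intro x t
  induction t using TensorProduct.induction_on with
  | zero => simp
  | add u v hu hv => simp only [TensorProduct.tmul_add, map_add] at *; rw [hu, hv]
  | tmul y z =>
    simp only [LinearMap.comp_apply, TensorProduct.map_tmul, A0, B0, C0, A2, Dm, ιS,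
      LinearMap.id_coe, id_eq, ι₁_apply, ι₁'_apply]
    generalize HB.snd.Δ x = u
    generalize HB.snd.Δ z = w
    induction u using TensorProduct.induction_on with
    | zero => simp [mul₃]
    | add u1 u2 h1 h2 =>
      simp only [map_add, TensorProduct.add_tmul] at *
      rw [h1, h2]
    | tmul a b =>
      induction w using TensorProduct.induction_on with
      | zero => simp [mul₃]
      | add w1 w2 h1 h2 =>
        simp only [map_add, TensorProduct.tmul_add] at *
        rw [h1, h2]
      | tmul d e =>
        simp only [mul₃, Ψm, ιS, LinearMap.comp_apply, TensorProduct.map_tmul,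
          LinearMap.mul'_apply, LinearMap.id_coe, id_eq, ι₁_apply, ι₂_apply,
          Algebra.TensorProduct.tmul_mul_tmul, one_mul, mul_one]

lemma LG1a : TensorProduct.map (LinearMap.id : H →ₗ[k] H)
      (ρmap k H HB.fst.Δ HB.snd.Δ HB.fst.S)
      ∘ₗ LinearMap.mul' k (H ⊗[k] H) ∘ₗ TensorProduct.map (ιS HB) HB.snd.Δ
    = LinearMap.mul' k (H ⊗[k] (H ⊗[k] H))
      ∘ₗ TensorProduct.map (B0 HB)
          (TensorProduct.map (LinearMap.id : H →ₗ[k] H)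
            (ρmap k H HB.fst.Δ HB.snd.Δ HB.fst.S) ∘ₗ HB.snd.Δ) := by
  apply TensorProduct.ext'; intro x z
  simp only [LinearMap.comp_apply, TensorProduct.map_tmul, ιS, B0,
    LinearMap.id_coe, id_eq, ι₁_apply, ι₁'_apply]
  generalize HB.snd.Δ z = w
  induction w using TensorProduct.induction_on with
  | zero => simp
  | add w1 w2 h1 h2 =>
    simp only [map_add, TensorProduct.tmul_add, mul_add] at *
    rw [h1, h2]
  | tmul d e =>
    simp only [TensorProduct.map_tmul, LinearMap.mul'_apply, LinearMap.id_coe, id_eq,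
      Algebra.TensorProduct.tmul_mul_tmul, one_mul, mul_one]

lemma LG1LHS : TensorProduct.map (LinearMap.id : H →ₗ[k] H)
      (ρmap k H HB.fst.Δ HB.snd.Δ HB.fst.S)
      ∘ₗ ρmap k H HB.fst.Δ HB.snd.Δ HB.fst.S
    = conv HB.fst.Δ (B0 HB)
        (TensorProduct.map (LinearMap.id : H →ₗ[k] H)
          (ρmap k H HB.fst.Δ HB.snd.Δ HB.fst.S) ∘ₗ HB.snd.Δ) := by
  apply LinearMap.ext; intro h
  have e := LinearMap.congr_fun (LG1a HB) (HB.fst.Δ h)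
  simp only [LinearMap.comp_apply] at e ⊢
  exact e

lemma LG1b : TensorProduct.map (LinearMap.id : H →ₗ[k] H)
      (ρmap k H HB.fst.Δ HB.snd.Δ HB.fst.S) ∘ₗ HB.snd.Δ
    = conv HB.fst.Δ (A2 HB) (conv HB.fst.Δ (B0 HB) (Dm HB)) := by
  have hsplit : TensorProduct.map (LinearMap.id : H →ₗ[k] H)
      (ρmap k H HB.fst.Δ HB.snd.Δ HB.fst.S)
      = Ψm HB ∘ₗ TensorProduct.map (LinearMap.id : H →ₗ[k] H) HB.fst.Δ := by
    rw [Ψm, ← TensorProduct.map_comp]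
    rfl
  apply LinearMap.ext; intro h
  rw [LinearMap.comp_apply, hsplit]
  have e3 := LinearMap.congr_fun (brace_conv HB) h
  simp only [LinearMap.comp_apply] at e3 ⊢
  rw [e3]
  have e2 := LinearMap.congr_fun (conv_conv HB.fst (A0 HB) (B0 HB) (C0 HB)) h
  simp only [LinearMap.comp_apply] at e2
  rw [e2]
  have e1 := LinearMap.congr_fun (X3 HB)
    (TensorProduct.map (LinearMap.id : H →ₗ[k] H) HB.fst.Δ (HB.fst.Δ h))
  simp only [LinearMap.comp_apply] at e1
  rw [e1]
  have e4 := LinearMap.congr_fun (conv_conv HB.fst (A2 HB) (B0 HB) (Dm HB)) h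
  simp only [LinearMap.comp_apply] at e4
  rw [← e4]

lemma G1map : TensorProduct.map (LinearMap.id : H →ₗ[k] H)
      (ρmap k H HB.fst.Δ HB.snd.Δ HB.fst.S)
      ∘ₗ ρmap k H HB.fst.Δ HB.snd.Δ HB.fst.S
    = (TensorProduct.assoc k H H H).toLinearMap
      ∘ₗ TensorProduct.map HB.snd.Δ (LinearMap.id : H →ₗ[k] H)
      ∘ₗ ρmap k H HB.fst.Δ HB.snd.Δ HB.fst.S := by
  have hχ : ∀ a b : H ⊗[k] H,
      ((TensorProduct.assoc k H H H).toLinearMap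
        ∘ₗ TensorProduct.map HB.snd.Δ (LinearMap.id : H →ₗ[k] H)) (a * b)
      = ((TensorProduct.assoc k H H H).toLinearMap
        ∘ₗ TensorProduct.map HB.snd.Δ (LinearMap.id : H →ₗ[k] H)) a
        * ((TensorProduct.assoc k H H H).toLinearMap
        ∘ₗ TensorProduct.map HB.snd.Δ (LinearMap.id : H →ₗ[k] H)) b := by
    intro a b
    simp only [LinearMap.comp_apply, LinearEquiv.coe_coe]
    rw [map_mul_map HB.snd.Δ (LinearMap.id : H →ₗ[k] H) HB.snd.comul_mul id_mul,
      assoc_mul]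
  have hχΔ' : ((TensorProduct.assoc k H H H).toLinearMap
      ∘ₗ TensorProduct.map HB.snd.Δ (LinearMap.id : H →ₗ[k] H)) ∘ₗ HB.snd.Δ
      = Dm HB := by
    apply LinearMap.ext; intro h
    simp only [LinearMap.comp_apply, LinearEquiv.coe_coe, Dm]
    exact (HB.snd.coassoc h).symm
  have hχιS : ((TensorProduct.assoc k H H H).toLinearMap
      ∘ₗ TensorProduct.map HB.snd.Δ (LinearMap.id : H →ₗ[k] H)) ∘ₗ ιS HB
      = TensorProduct.map (LinearMap.id : H →ₗ[k] H) (ι₁ k H H)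
          ∘ₗ (HB.snd.Δ ∘ₗ HB.fst.S) := by
    apply LinearMap.ext; intro x
    simp only [LinearMap.comp_apply, LinearEquiv.coe_coe, ιS, ι₁_apply,
      TensorProduct.map_tmul, LinearMap.id_coe, id_eq]
    exact assoc_tmul_one (HB.snd.Δ (HB.fst.S x))
  have hF : TensorProduct.map (LinearMap.id : H →ₗ[k] H) (ι₁ k H H) ∘ₗ Fm HB
      = conv HB.fst.Δ (B0 HB) (conv HB.fst.Δ (A2 HB) (B0 HB)) := by
    rw [Fm, conv_push HB.fst.Δ _ _ _
        (map_mul_map (LinearMap.id : H →ₗ[k] H) (ι₁ k H H) id_mul ι₁_mul),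
      conv_push HB.fst.Δ _ _ _
        (map_mul_map (LinearMap.id : H →ₗ[k] H) (ι₁ k H H) id_mul ι₁_mul),
      mapidi1_iS, mapidi1_K]
  have hR : (TensorProduct.assoc k H H H).toLinearMap
      ∘ₗ TensorProduct.map HB.snd.Δ (LinearMap.id : H →ₗ[k] H)
      ∘ₗ ρmap k H HB.fst.Δ HB.snd.Δ HB.fst.S
      = conv HB.fst.Δ (conv HB.fst.Δ (B0 HB) (conv HB.fst.Δ (A2 HB) (B0 HB))) (Dm HB) := by
    rw [rho_eq]
    rw [show (TensorProduct.assoc k H H H).toLinearMap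
        ∘ₗ TensorProduct.map HB.snd.Δ (LinearMap.id : H →ₗ[k] H)
        ∘ₗ conv HB.fst.Δ (ιS HB) HB.snd.Δ
        = ((TensorProduct.assoc k H H H).toLinearMap
          ∘ₗ TensorProduct.map HB.snd.Δ (LinearMap.id : H →ₗ[k] H))
          ∘ₗ conv HB.fst.Δ (ιS HB) HB.snd.Δ from by rw [LinearMap.comp_assoc]]
    rw [conv_push HB.fst.Δ _ _ _ hχ, hχΔ', hχιS, L1, hF]
  rw [LG1LHS, LG1b, hR, conv_assoc HB.fst, conv_assoc HB.fst]

lemma G2map : cLm HB.snd.ε ∘ₗ ρmap k H HB.fst.Δ HB.snd.Δ HB.fst.S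
    = LinearMap.id := by
  rw [rho_eq, conv_push HB.fst.Δ _ _ _ (cLm_mul HB.snd.ε HB.snd.counit_mul)]
  have h1 : cLm HB.snd.ε ∘ₗ ιS HB = uS HB := by
    apply LinearMap.ext; intro x
    simp [ιS, uS, Algebra.algebraMap_eq_smul_one]
  rw [h1, cL_eps'_Δ', E5]

lemma G4map : cRm HB.fst.ε ∘ₗ ρmap k H HB.fst.Δ HB.snd.Δ HB.fst.S = uE HB := by
  rw [rho_eq, conv_push HB.fst.Δ _ _ _ (cRm_mul HB.fst.ε HB.fst.counit_mul)]
  have h1 : cRm HB.fst.ε ∘ₗ ιS HB = HB.fst.S := by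
    apply LinearMap.ext; intro x
    simp [ιS, HB.fst.counit_one]
  have h2 : cRm HB.fst.ε ∘ₗ HB.snd.Δ = LinearMap.id := by
    rw [← eps_eq]; exact cR_eps'_Δ' HB
  rw [h1, h2, S_antileft]

end BraceAux5
/-- Lemma 2.5.  For a Hopf brace `(H, Δ, Δ')` with antipode `S`
for `Δ`, the map `ρ(h) = S(h_1) h_{21'} ⊗ h_{22'}` makes `H` a left comodule
coalgebra over the Hopf algebra `(H, Δ', ε)`:
(i) `ρ` is a coassociative counital left `(H, Δ')`-coaction, and
(ii) `h_{(-1)} ⊗ Δ(h_{(0)}) = h_{1(-1)} h_{2(-1)} ⊗ h_{1(0)} ⊗ h_{2(0)}` and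
`h_{(-1)} ε(h_{(0)}) = ε(h) 1_H`. -/
theorem lemma_2_5 {k : Type*} [Field k] {H : Type*} [Ring H] [Algebra k H]
    (HB : HopfBrace k H) :
    LeftCoaction k H H HB.snd.Δ HB.snd.ε
        (ρmap k H HB.fst.Δ HB.snd.Δ HB.fst.S) ∧
    IsComodCoalg k H H HB.fst.Δ HB.fst.ε
        (ρmap k H HB.fst.Δ HB.snd.Δ HB.fst.S) := by
  refine ⟨⟨fun h => ?_, fun h => ?_⟩, fun h => ?_, fun h => ?_⟩
  · have e := LinearMap.congr_fun (G1map HB) h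
    simp only [LinearMap.comp_apply, LinearEquiv.coe_coe] at e
    exact e
  · have e := LinearMap.congr_fun (G2map HB) h
    simp only [LinearMap.comp_apply, cLm, LinearEquiv.coe_coe, LinearMap.id_coe,
      id_eq] at e
    exact e
  · have e := LinearMap.congr_fun (G3map HB) h
    simp only [LinearMap.comp_apply] at e
    exact e
  · have e := LinearMap.congr_fun (G4map HB) h
    simp only [LinearMap.comp_apply, cRm, uE, LinearEquiv.coe_coe, LinearMap.id_coe,
      id_eq, Algebra.linearMap_apply] at e
    exact e

end HopfPaper
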